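/- Let c₁, c₂ > 0 and η ∈ [0,1). There exist constants C₀ ≥ 1 and C > 0, depending only on c₁, c₂ and η, with the following property. Let p ≥ 1, let Σ be a p×p real symmetric matrix with c₁ ≤ Σ_{ii} ≤ c₂ for all i, and set s_p := max_{1≤i≤p} Σ_{j=1}^p |Σ_{ij}|^η (Σ_{ii}Σ_{jj})^{(1−η)/2}. Let Σ̃ be a p×p real symmetric matrix with max_{i,j}|Σ̃_{ij} − Σ_{ij}| ≤ ω for some 0 < ω ≤ min(1, c₁/2). Set τ := C₀·ω and, for each i, j, τ_{ij} := τ·√((Σ̃_{ii} ∨ 0)(Σ̃_{jj} ∨ 0)). For i ≠ j let s_{ij} : ℝ → ℝ be any function satisfying |s_{ij}(z) − z| ≤ τ_{ij} for all z, and define the thresholded matrix Σ̂ entrywise by Σ̂_{ii} := Σ̃_{ii} ∨ 0 and, for i ≠ j, Σ̂_{ij} := s_{ij}(Σ̃_{ij}) if |Σ̃_{ij}| ≥ τ_{ij} and Σ̂_{ij} := 0 otherwise. Then max_{1≤i≤p} Σ_{j=1}^p |Σ̂_{ij} − Σ_{ij}| ≤ C·s_p·ω^{1−η}. -/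
import Mathlib


open Matrix

set_option maxHeartbeats 1000000

/-- Deterministic error bound for the adaptive generalized-thresholding estimator of an
approximately sparse covariance matrix: given a preliminary estimator accurate to level ω
in the max norm, the thresholded estimator has maximum absolute row-sum error at most
C·s_p·ω^{1−η}. -/
theorem stmt_16 (c₁ c₂ η : ℝ) (hc₁ : 0 < c₁) (hc₂ : 0 < c₂) (hη₀ : 0 ≤ η) (hη₁ : η < 1) :
    ∃ C₀ C : ℝ, 1 ≤ C₀ ∧ 0 < C ∧
      ∀ (p : ℕ), 1 ≤ p →
      ∀ (S St : Matrix (Fin p) (Fin p) ℝ),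
        S.IsHermitian → St.IsHermitian →
        (∀ i, c₁ ≤ S i i) → (∀ i, S i i ≤ c₂) →
        ∀ ω : ℝ, 0 < ω → ω ≤ min 1 (c₁ / 2) →
        (∀ i j, |St i j - S i j| ≤ ω) →
        ∀ s : Fin p → Fin p → ℝ → ℝ,
          (∀ i j : Fin p, i ≠ j → ∀ z : ℝ,
            |s i j z - z| ≤ C₀ * ω * Real.sqrt (max (St i i) 0 * max (St j j) 0)) →
          ∀ i : Fin p,
            ∑ j, |(if i = j then max (St i i) 0
                   else if C₀ * ω * Real.sqrt (max (St i i) 0 * max (St j j) 0) ≤ |St i j|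
                     then s i j (St i j) else 0) - S i j|
              ≤ C * (⨆ i' : Fin p, ∑ j, |S i' j| ^ η * (S i' i' * S j j) ^ ((1 - η) / 2)) *
                ω ^ (1 - η) := by
  set m : ℝ := min c₁ 1 with hm_def
  have hm0 : 0 < m := lt_min hc₁ one_pos
  have hm1 : m ≤ 1 := min_le_right _ _
  have hmc : m ≤ c₁ := min_le_left _ _
  set C₀ : ℝ := max 1 (4 / c₁) with hC₀_def
  have hC₀1 : 1 ≤ C₀ := le_max_left _ _
  have hC₀0 : 0 < C₀ := lt_of_lt_of_le one_pos hC₀1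
  have hC₀4 : 4 / c₁ ≤ C₀ := le_max_right _ _
  have hC₀half : 2 ≤ C₀ * (c₁ / 2) := by
    rw [div_le_iff₀ hc₁] at hC₀4
    nlinarith
  set K : ℝ := C₀ * (c₂ + 1) + 1 with hK_def
  have hK1 : 1 ≤ K := by nlinarith
  have hK0 : 0 < K := lt_of_lt_of_le one_pos hK1
  set C : ℝ := max (1 / (m * m)) (K / m) with hC_def
  have hC1 : 1 / (m * m) ≤ C := le_max_left _ _
  have hC2 : K / m ≤ C := le_max_right _ _
  have hC0 : 0 < C := lt_of_lt_of_le (by positivity) hC1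
  have hCmm : 1 ≤ C * (m * m) := by
    have h := mul_le_mul_of_nonneg_right hC1 (le_of_lt (mul_pos hm0 hm0))
    rwa [one_div_mul_cancel (by positivity : m * m ≠ 0)] at h
  have hCK : K ≤ C * m := by
    have h := mul_le_mul_of_nonneg_right hC2 hm0.le
    rwa [div_mul_cancel₀ _ (ne_of_gt hm0)] at h
  refine ⟨C₀, C, hC₀1, hC0, ?_⟩
  intro p hp S St hS hSt hd1 hd2 ω hω0 hωle hb s hs i
  have hω1 : ω ≤ 1 := le_trans hωle (min_le_left _ _)
  have hωc : ω ≤ c₁ / 2 := le_trans hωle (min_le_right _ _)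
  -- diagonal bounds for St
  have hSt_lb : ∀ k : Fin p, c₁ / 2 ≤ St k k := by
    intro k
    have h1 := abs_le.mp (hb k k)
    have h2 := hd1 k
    linarith [h1.1]
  have hSt_ub : ∀ k : Fin p, St k k ≤ c₂ + 1 := by
    intro k
    have h1 := abs_le.mp (hb k k)
    have h2 := hd2 k
    linarith [h1.2]
  have hmaxSt : ∀ k : Fin p, max (St k k) 0 = St k k := by
    intro k
    exact max_eq_left (le_trans (by linarith) (hSt_lb k))
  -- sqrt bounds
  have hsq_lb : ∀ k l : Fin p, c₁ / 2 ≤ Real.sqrt (St k k * St l l) := by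
    intro k l
    have h : c₁ / 2 * (c₁ / 2) ≤ St k k * St l l :=
      mul_le_mul (hSt_lb k) (hSt_lb l) (by linarith) (le_trans (by linarith) (hSt_lb k))
    have h2 := Real.sqrt_le_sqrt h
    rwa [Real.sqrt_mul_self (by linarith : (0:ℝ) ≤ c₁ / 2)] at h2
  have hsq_ub : ∀ k l : Fin p, Real.sqrt (St k k * St l l) ≤ c₂ + 1 := by
    intro k l
    have h : St k k * St l l ≤ (c₂ + 1) * (c₂ + 1) :=
      mul_le_mul (hSt_ub k) (hSt_ub l) (le_trans (by linarith) (hSt_lb l)) (by linarith)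
    have h2 := Real.sqrt_le_sqrt h
    rwa [Real.sqrt_mul_self (by linarith : (0:ℝ) ≤ c₂ + 1)] at h2
  -- rpow facts
  have hωpow0 : 0 < ω ^ (1 - η) := Real.rpow_pos_of_pos hω0 _
  have hω_le_pow : ω ≤ ω ^ (1 - η) := by
    calc ω = ω ^ (1 : ℝ) := (Real.rpow_one ω).symm
      _ ≤ ω ^ (1 - η) := Real.rpow_le_rpow_of_exponent_ge hω0 hω1 (by linarith)
  have hm_le_mη : m ≤ m ^ η := by
    calc m = m ^ (1 : ℝ) := (Real.rpow_one m).symm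
      _ ≤ m ^ η := Real.rpow_le_rpow_of_exponent_ge hm0 hm1 (by linarith)
  have hB_lb : ∀ k l : Fin p, m ≤ (S k k * S l l) ^ ((1 - η) / 2) := by
    intro k l
    have h1 : m * m ≤ S k k * S l l :=
      mul_le_mul (le_trans hmc (hd1 k)) (le_trans hmc (hd1 l)) hm0.le
        (le_trans hm0.le (le_trans hmc (hd1 k)))
    have h2 : (m * m) ^ ((1 - η) / 2) ≤ (S k k * S l l) ^ ((1 - η) / 2) :=
      Real.rpow_le_rpow (by positivity) h1 (by linarith)
    have h3 : (m * m) ^ ((1 - η) / 2) = m ^ (1 - η) := by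
      rw [Real.mul_rpow hm0.le hm0.le, ← Real.rpow_add hm0]
      ring_nf
    have h4 : m ≤ m ^ (1 - η) := by
      calc m = m ^ (1 : ℝ) := (Real.rpow_one m).symm
        _ ≤ m ^ (1 - η) := Real.rpow_le_rpow_of_exponent_ge hm0 hm1 (by linarith)
    rw [h3] at h2
    linarith
  -- per-entry bound
  have key : ∀ j : Fin p,
      |(if i = j then max (St i i) 0
        else if C₀ * ω * Real.sqrt (max (St i i) 0 * max (St j j) 0) ≤ |St i j|
          then s i j (St i j) else 0) - S i j|
      ≤ C * (|S i j| ^ η * (S i i * S j j) ^ ((1 - η) / 2)) * ω ^ (1 - η) := by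
    intro j
    have hAnn : (0:ℝ) ≤ |S i j| ^ η := Real.rpow_nonneg (abs_nonneg _) _
    have hB := hB_lb i j
    by_cases hij : i = j
    · subst hij
      rw [if_pos rfl, hmaxSt i]
      have hA : m ≤ |S i i| ^ η := by
        have h1 : m ≤ |S i i| := le_trans hmc (le_trans (hd1 i) (le_abs_self _))
        have h2 : m ^ η ≤ |S i i| ^ η := Real.rpow_le_rpow hm0.le h1 hη₀
        linarith
      have herr : |St i i - S i i| ≤ ω := hb i i
      have hq : ω ^ (1 - η) ≤ C * (|S i i| ^ η * (S i i * S i i) ^ ((1 - η) / 2)) * ω ^ (1 - η) := by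
        have hAB : m * m ≤ |S i i| ^ η * (S i i * S i i) ^ ((1 - η) / 2) :=
          mul_le_mul hA hB hm0.le (le_trans hm0.le hA)
        nlinarith [mul_le_mul_of_nonneg_right hAB hC0.le,
          mul_le_mul_of_nonneg_right hCmm hωpow0.le]
      calc |St i i - S i i| ≤ ω := herr
        _ ≤ ω ^ (1 - η) := hω_le_pow
        _ ≤ _ := hq
    · rw [if_neg hij]
      simp only [hmaxSt]
      have hT2 : 2 * ω ≤ C₀ * ω * Real.sqrt (St i i * St j j) := by
        have h := hsq_lb i j
        nlinarith [mul_le_mul_of_nonneg_left h (mul_nonneg hC₀0.le hω0.le),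
          mul_le_mul_of_nonneg_right hC₀half hω0.le]
      have hTK : C₀ * ω * Real.sqrt (St i i * St j j) ≤ C₀ * (c₂ + 1) * ω := by
        have h := hsq_ub i j
        nlinarith [mul_le_mul_of_nonneg_left h (mul_nonneg hC₀0.le hω0.le)]
      -- common final step
      have final : ∀ E : ℝ, |E| ≤ K * (|S i j| ^ η * ω ^ (1 - η)) →
          |E| ≤ C * (|S i j| ^ η * (S i i * S j j) ^ ((1 - η) / 2)) * ω ^ (1 - η) := by
        intro E hE
        have h1 : K * (|S i j| ^ η * ω ^ (1 - η))
            ≤ C * m * (|S i j| ^ η * ω ^ (1 - η)) :=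
          mul_le_mul_of_nonneg_right hCK (by positivity)
        have h2 : C * m * (|S i j| ^ η * ω ^ (1 - η))
            ≤ C * (|S i j| ^ η * (S i i * S j j) ^ ((1 - η) / 2)) * ω ^ (1 - η) := by
          nlinarith [mul_nonneg hAnn hωpow0.le, mul_nonneg hC0.le hAnn,
            mul_le_mul_of_nonneg_left hB (mul_nonneg hC0.le hAnn)]
        linarith
      by_cases hkeep : C₀ * ω * Real.sqrt (St i i * St j j) ≤ |St i j|
      · rw [if_pos hkeep]
        have h1 : |s i j (St i j) - St i j| ≤ C₀ * ω * Real.sqrt (St i i * St j j) := by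
          have h := hs i j hij (St i j)
          simpa only [hmaxSt] using h
        have h2 := hb i j
        have herr : |s i j (St i j) - S i j| ≤ K * ω := by
          have h3 : |s i j (St i j) - S i j| ≤ |s i j (St i j) - St i j| + |St i j - S i j| := by
            have := abs_sub_le (s i j (St i j)) (St i j) (S i j)
            linarith
          have : |s i j (St i j) - S i j| ≤ C₀ * (c₂ + 1) * ω + ω := by linarith
          calc |s i j (St i j) - S i j| ≤ C₀ * (c₂ + 1) * ω + ω := this
            _ = K * ω := by ring
        have hSlb : ω ≤ |S i j| := by
          have h4 : |St i j| - |S i j| ≤ |St i j - S i j| := abs_sub_abs_le_abs_sub _ _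
          linarith
        have hωη : ω ^ η ≤ |S i j| ^ η := Real.rpow_le_rpow hω0.le hSlb hη₀
        have hsplit : ω = ω ^ η * ω ^ (1 - η) := by
          rw [← Real.rpow_add hω0, show η + (1 - η) = 1 by ring, Real.rpow_one]
        apply final
        calc |s i j (St i j) - S i j| ≤ K * ω := herr
          _ = K * (ω ^ η * ω ^ (1 - η)) := by rw [← hsplit]
          _ ≤ K * (|S i j| ^ η * ω ^ (1 - η)) := by
              apply mul_le_mul_of_nonneg_left _ hK0.le
              exact mul_le_mul_of_nonneg_right hωη hωpow0.le
      · rw [if_neg hkeep]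
        push_neg at hkeep
        rcases eq_or_ne (S i j) 0 with h0 | h0
        · have hR : 0 ≤ C * (|S i j| ^ η * (S i i * S j j) ^ ((1 - η) / 2)) * ω ^ (1 - η) :=
            mul_nonneg (mul_nonneg hC0.le (mul_nonneg hAnn (le_trans hm0.le hB))) hωpow0.le
          have hz : |(0:ℝ) - S i j| = 0 := by rw [h0]; simp
          rw [hz]
          exact hR
        · have hA0 : 0 < |S i j| := abs_pos.mpr h0
          have h2 := hb i j
          have herr : |S i j| ≤ K * ω := by
            have h4 : |S i j| - |St i j| ≤ |S i j - St i j| := abs_sub_abs_le_abs_sub _ _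
            have h5 : |S i j - St i j| = |St i j - S i j| := abs_sub_comm _ _
            have h6 : |S i j| ≤ |St i j| + ω := by rw [h5] at h4; linarith
            have h7 : |S i j| ≤ C₀ * (c₂ + 1) * ω + ω := by linarith
            calc |S i j| ≤ C₀ * (c₂ + 1) * ω + ω := h7
              _ = K * ω := by ring
          have hsplit : |S i j| = |S i j| ^ η * |S i j| ^ (1 - η) := by
            rw [← Real.rpow_add hA0, show η + (1 - η) = 1 by ring, Real.rpow_one]
          have h1η : |S i j| ^ (1 - η) ≤ K * ω ^ (1 - η) := by
            have ha : |S i j| ^ (1 - η) ≤ (K * ω) ^ (1 - η) :=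
              Real.rpow_le_rpow (abs_nonneg _) herr (by linarith)
            have hbq : (K * ω) ^ (1 - η) = K ^ (1 - η) * ω ^ (1 - η) :=
              Real.mul_rpow hK0.le hω0.le
            have hc : K ^ (1 - η) ≤ K := by
              calc K ^ (1 - η) ≤ K ^ (1 : ℝ) :=
                    Real.rpow_le_rpow_of_exponent_le hK1 (by linarith)
                _ = K := Real.rpow_one K
            have hd : K ^ (1 - η) * ω ^ (1 - η) ≤ K * ω ^ (1 - η) :=
              mul_le_mul_of_nonneg_right hc hωpow0.le
            rw [hbq] at ha
            linarith
          apply final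
          rw [abs_sub_comm, sub_zero]
          calc |S i j| = |S i j| ^ η * |S i j| ^ (1 - η) := hsplit
            _ ≤ |S i j| ^ η * (K * ω ^ (1 - η)) :=
                mul_le_mul_of_nonneg_left h1η hAnn
            _ = K * (|S i j| ^ η * ω ^ (1 - η)) := by ring
  -- sum up
  have hsum : ∑ j, |(if i = j then max (St i i) 0
        else if C₀ * ω * Real.sqrt (max (St i i) 0 * max (St j j) 0) ≤ |St i j|
          then s i j (St i j) else 0) - S i j|
      ≤ ∑ j, C * (|S i j| ^ η * (S i i * S j j) ^ ((1 - η) / 2)) * ω ^ (1 - η) :=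
    Finset.sum_le_sum fun j _ => key j
  have heq : ∑ j, C * (|S i j| ^ η * (S i i * S j j) ^ ((1 - η) / 2)) * ω ^ (1 - η)
      = C * (∑ j, |S i j| ^ η * (S i i * S j j) ^ ((1 - η) / 2)) * ω ^ (1 - η) := by
    rw [Finset.mul_sum, Finset.sum_mul]
  have hsup : (∑ j, |S i j| ^ η * (S i i * S j j) ^ ((1 - η) / 2))
      ≤ ⨆ i' : Fin p, ∑ j, |S i' j| ^ η * (S i' i' * S j j) ^ ((1 - η) / 2) :=
    le_ciSup (f := fun i' : Fin p => ∑ j, |S i' j| ^ η * (S i' i' * S j j) ^ ((1 - η) / 2))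
      (Set.finite_range _).bddAbove i
  calc ∑ j, |(if i = j then max (St i i) 0
        else if C₀ * ω * Real.sqrt (max (St i i) 0 * max (St j j) 0) ≤ |St i j|
          then s i j (St i j) else 0) - S i j|
      ≤ C * (∑ j, |S i j| ^ η * (S i i * S j j) ^ ((1 - η) / 2)) * ω ^ (1 - η) := by
        rw [← heq]; exact hsum
    _ ≤ C * (⨆ i' : Fin p, ∑ j, |S i' j| ^ η * (S i' i' * S j j) ^ ((1 - η) / 2)) *
        ω ^ (1 - η) :=
        mul_le_mul_of_nonneg_right (mul_le_mul_of_nonneg_left hsup hC0.le) hωpow0.le
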